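/- arXiv:1601.01464 — 2 statements merged into one kernel-verified Lean document; each statement's English description precedes it below -/
import Mathlib

section
/- Let (Ω, ν) be a σ-finite measure space, W a strictly positive measurable function, and ∫ φWφ̃ dν = 1 with φ, φ̃ > 0. If f is measurable with ‖f‖_{∞,φ^{-1}} = 1 and ‖f‖_{1, Wφ̃} = 1 (i.e., equality holds at both endpoints of the embedding chain), then |f| = φ almost everywhere. -/
open MeasureTheory ENNReal

/-- Equality case in the endpoint embedding: if
`‖f‖_{∞,φ⁻¹} = 1` and `‖f‖_{1,Wφ̃} = 1` with `∫ φWφ̃ dν = 1`, then `|f| = φ` a.e. -/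
theorem equality_case_embedding {α : Type*} [MeasurableSpace α] (ν : Measure α) [SigmaFinite ν]
    (W φ φt : α → ℝ) (hW : ∀ x, 0 < W x) (hφ : ∀ x, 0 < φ x) (hφt : ∀ x, 0 < φt x)
    (hmW : Measurable W) (hmφ : Measurable φ) (hmφt : Measurable φt)
    (hnorm : ∫⁻ x, ENNReal.ofReal (φ x * W x * φt x) ∂ν = 1)
    (f : α → ℝ) (hf : Measurable f)
    (hinf : eLpNorm (fun x => f x * (φ x)⁻¹) ∞ ν = 1)
    (hone : ∫⁻ x, ENNReal.ofReal (|f x| * W x * φt x) ∂ν = 1) :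
    ∀ᵐ x ∂ν, |f x| = φ x := by
  -- Step 1: |f| ≤ φ a.e.
  have hle : ∀ᵐ x ∂ν, |f x| ≤ φ x := by
    have h1 : eLpNorm (fun x => f x * (φ x)⁻¹) ∞ ν
        = essSup (fun x => (‖f x * (φ x)⁻¹‖₊ : ℝ≥0∞)) ν := by
      rw [eLpNorm_exponent_top]; rfl
    have h2 := _root_.ae_le_essSup (μ := ν) (f := fun x => (‖f x * (φ x)⁻¹‖₊ : ℝ≥0∞))
    rw [← h1, hinf] at h2
    filter_upwards [h2] with x hx
    have hx' : ‖f x * (φ x)⁻¹‖ ≤ 1 := by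
      have := (ENNReal.coe_le_one_iff).mp hx
      exact_mod_cast this
    rw [Real.norm_eq_abs, abs_mul, abs_inv, abs_of_pos (hφ x)] at hx'
    have := (div_le_one (hφ x)).mp (by rwa [div_eq_mul_inv])
    exact this
  -- pointwise: |f| W φt ≤ φ W φt a.e.
  have hWφt : ∀ x, 0 < W x * φt x := fun x => mul_pos (hW x) (hφt x)
  have hle' : ∀ᵐ x ∂ν, ENNReal.ofReal (|f x| * W x * φt x)
      ≤ ENNReal.ofReal (φ x * W x * φt x) := by
    filter_upwards [hle] with x hx
    exact ENNReal.ofReal_le_ofReal (mul_le_mul_of_nonneg_right (mul_le_mul_of_nonneg_right hx (hW x).le) (hφt x).le)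
  have hmg : Measurable fun x => ENNReal.ofReal (φ x * W x * φt x) :=
    ((hmφ.mul hmW).mul hmφt).ennreal_ofReal
  have hmh : Measurable fun x => ENNReal.ofReal (|f x| * W x * φt x) :=
    ((hf.abs.mul hmW).mul hmφt).ennreal_ofReal
  -- Step 2: ∫ (g - h) = 0
  have hsub : ∫⁻ x, (ENNReal.ofReal (φ x * W x * φt x)
      - ENNReal.ofReal (|f x| * W x * φt x)) ∂ν = 0 := by
    rw [lintegral_sub hmh (by rw [hone]; exact one_ne_top) hle', hnorm, hone, tsub_self]
  have hzero : ∀ᵐ x ∂ν, ENNReal.ofReal (φ x * W x * φt x)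
      - ENNReal.ofReal (|f x| * W x * φt x) = 0 :=
    (lintegral_eq_zero_iff (hmg.sub hmh)).mp hsub
  filter_upwards [hzero, hle] with x hx hxle
  have hge : ENNReal.ofReal (φ x * W x * φt x) ≤ ENNReal.ofReal (|f x| * W x * φt x) :=
    tsub_eq_zero_iff_le.mp hx
  have : φ x * W x * φt x ≤ |f x| * W x * φt x := by
    have := (ENNReal.ofReal_le_ofReal_iff (mul_nonneg (mul_nonneg (abs_nonneg _) (hW x).le) (hφt x).le)).mp hge
    exact this
  have h2 : φ x ≤ |f x| := by
    have hpos := hWφt x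
    nlinarith [hW x, hφt x]
  linarith
end

section
/- Let (Ω, ν) be a σ-finite measure space, W > 0, φ, φ̃ > 0 measurable with ∫ φWφ̃ dν < ∞, and let G ≥ 0 be a kernel with ∫_Ω G(x,y) W(x) φ̃(x) dν(x) ≤ φ̃(y)/(m−λ) for all y, where λ < m. Suppose ψ ∈ L^1(Wφ̃) satisfies ψ(x)/(m−λ) = ∫_Ω G(x,y) W(y) ψ(y) dν(y) for a.e. x, and that the inequality above is strict on a set of positive measure where Wφ̃|ψ| > 0 unless ψ has constant sign. Then: ∫ |∫ G(x,y)W(y)ψ(y)dν(y)| W(x)φ̃(x) dν(x) = ∫ (∫ G(x,y)W(y)|ψ(y)|dν(y)) W(x)φ̃(x) dν(x), and consequently ψ does not change sign a.e. (ψ ≥ 0 a.e. or ψ ≤ 0 a.e.). -/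
open MeasureTheory ENNReal

/-- key computation of the `L¹` Liouville theorem: let `G > 0` be a kernel
with `∫ G(x,y) W(x) φ̃(x) dν(x) ≤ φ̃(y)/(m−λ)` for all `y`, and suppose `ψ ∈ L¹(Wφ̃)`,
`ψ ≠ 0` in `L¹(Wφ̃)`, satisfies the eigenvalue equation
`ψ(x)/(m−λ) = ∫ G(x,y) W(y) ψ(y) dν(y)` a.e.  Then equality holds in the triangle
inequality under the integral, and consequently `ψ` does not change sign a.e. -/
theorem L1_liouville_sign {α : Type*} [MeasurableSpace α] (ν : Measure α) [SigmaFinite ν]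
    (G : α → α → ℝ) (hGmeas : Measurable (Function.uncurry G)) (hGpos : ∀ x y, 0 < G x y)
    (W φ φt : α → ℝ) (hW : ∀ x, 0 < W x) (hφ : ∀ x, 0 < φ x) (hφt : ∀ x, 0 < φt x)
    (hmW : Measurable W) (hmφ : Measurable φ) (hmφt : Measurable φt)
    (hint : ∫⁻ x, ENNReal.ofReal (φ x * W x * φt x) ∂ν < ∞)
    (m lam : ℝ) (hlam : lam < m)
    (hdual : ∀ y, ∫⁻ x, ENNReal.ofReal (G x y * W x * φt x) ∂ν ≤
      ENNReal.ofReal (φt y / (m - lam)))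
    (ψ : α → ℝ) (hψmeas : Measurable ψ)
    (hψL1 : ∫⁻ y, ENNReal.ofReal (|ψ y| * W y * φt y) ∂ν < ∞)
    (hψne : 0 < ∫⁻ y, ENNReal.ofReal (|ψ y| * W y * φt y) ∂ν)
    (heig : ∀ᵐ x ∂ν, ψ x / (m - lam) = ∫ y, G x y * W y * ψ y ∂ν) :
    (∫⁻ x, ENNReal.ofReal (|∫ y, G x y * W y * ψ y ∂ν| * W x * φt x) ∂ν =
      ∫⁻ x, ENNReal.ofReal ((∫ y, G x y * W y * |ψ y| ∂ν) * W x * φt x) ∂ν) ∧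
    ((∀ᵐ y ∂ν, 0 ≤ ψ y) ∨ (∀ᵐ y ∂ν, ψ y ≤ 0)) := by
  have hc : (0:ℝ) < m - lam := sub_pos.mpr hlam
  set c : ℝ := m - lam with hcdef
  have hGx : ∀ x, Measurable (fun y => G x y) := fun x => hGmeas.of_uncurry_left
  have hnn1 : ∀ x y, (0:ℝ) ≤ G x y * W y * |ψ y| := fun x y =>
    mul_nonneg (mul_nonneg (hGpos x y).le (hW y).le) (abs_nonneg _)
  have hnn2 : ∀ x y, (0:ℝ) ≤ G x y * W x * φt x := fun x y =>
    mul_nonneg (mul_nonneg (hGpos x y).le (hW x).le) (hφt x).le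
  set J : α → ℝ≥0∞ := fun x => ∫⁻ y, ENNReal.ofReal (G x y * W y * |ψ y|) ∂ν with hJdef
  have hFmeas : Measurable (Function.uncurry fun x y => ENNReal.ofReal (G x y * W y * |ψ y|)) := by
    apply ENNReal.measurable_ofReal.comp
    exact (hGmeas.mul (hmW.comp measurable_snd)).mul ((hψmeas.comp measurable_snd).abs)
  have hJmeas : Measurable J := Measurable.lintegral_prod_right hFmeas
  have hIntRepr : ∀ x, (∫ y, G x y * W y * |ψ y| ∂ν) = (J x).toReal := by
    intro x
    rw [integral_eq_lintegral_of_nonneg_ae]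
    · exact Filter.Eventually.of_forall fun y => hnn1 x y
    · exact (((hGx x).mul hmW).mul hψmeas.abs).aestronglyMeasurable
  have htri : ∀ x, |∫ y, G x y * W y * ψ y ∂ν| ≤ ∫ y, G x y * W y * |ψ y| ∂ν := by
    intro x
    calc |∫ y, G x y * W y * ψ y ∂ν| = ‖∫ y, G x y * W y * ψ y ∂ν‖ :=
          (Real.norm_eq_abs _).symm
      _ ≤ ∫ y, ‖G x y * W y * ψ y‖ ∂ν := norm_integral_le_integral_norm _
      _ = ∫ y, G x y * W y * |ψ y| ∂ν := by
          refine integral_congr_ae (Filter.Eventually.of_forall fun y => ?_)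
          show ‖G x y * W y * ψ y‖ = G x y * W y * |ψ y|
          rw [Real.norm_eq_abs, abs_mul, abs_of_pos (mul_pos (hGpos x y) (hW y))]
  -- Tonelli
  have hTon : ∫⁻ x, J x * ENNReal.ofReal (W x * φt x) ∂ν
      = ∫⁻ y, (∫⁻ x, ENNReal.ofReal (G x y * W x * φt x) ∂ν) * ENNReal.ofReal (W y * |ψ y|) ∂ν := by
    have h1 : ∀ x, J x * ENNReal.ofReal (W x * φt x)
        = ∫⁻ y, ENNReal.ofReal (G x y * W x * φt x) * ENNReal.ofReal (W y * |ψ y|) ∂ν := by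
      intro x
      rw [hJdef]
      rw [← lintegral_mul_const' (ENNReal.ofReal (W x * φt x)) _ ENNReal.ofReal_ne_top]
      refine lintegral_congr fun y => ?_
      rw [← ENNReal.ofReal_mul (hnn1 x y), ← ENNReal.ofReal_mul (hnn2 x y)]
      congr 1; ring
    calc ∫⁻ x, J x * ENNReal.ofReal (W x * φt x) ∂ν
        = ∫⁻ x, ∫⁻ y, ENNReal.ofReal (G x y * W x * φt x) * ENNReal.ofReal (W y * |ψ y|) ∂ν ∂ν :=
          lintegral_congr h1
      _ = ∫⁻ y, ∫⁻ x, ENNReal.ofReal (G x y * W x * φt x) * ENNReal.ofReal (W y * |ψ y|) ∂ν ∂ν := by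
          apply lintegral_lintegral_swap
          apply Measurable.aemeasurable
          refine Measurable.mul (f := fun p : α × α => ENNReal.ofReal (G p.1 p.2 * W p.1 * φt p.1))
            (g := fun p : α × α => ENNReal.ofReal (W p.2 * |ψ p.2|)) ?_ ?_
          · exact ENNReal.measurable_ofReal.comp
              ((hGmeas.mul (hmW.comp measurable_fst)).mul (hmφt.comp measurable_fst))
          · exact ENNReal.measurable_ofReal.comp
              ((hmW.comp measurable_snd).mul ((hψmeas.comp measurable_snd).abs))
      _ = ∫⁻ y, (∫⁻ x, ENNReal.ofReal (G x y * W x * φt x) ∂ν) * ENNReal.ofReal (W y * |ψ y|) ∂ν := by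
          refine lintegral_congr fun y => ?_
          exact lintegral_mul_const' _ _ ENNReal.ofReal_ne_top
  set L : ℝ≥0∞ := ∫⁻ y, ENNReal.ofReal (|ψ y| * W y * φt y / c) ∂ν with hLdef
  have hLrepr : L = (∫⁻ y, ENNReal.ofReal (|ψ y| * W y * φt y) ∂ν) * ENNReal.ofReal (1 / c) := by
    rw [hLdef, ← lintegral_mul_const' (ENNReal.ofReal (1 / c)) _ ENNReal.ofReal_ne_top]
    refine lintegral_congr fun y => ?_
    rw [← ENNReal.ofReal_mul (mul_nonneg (mul_nonneg (abs_nonneg _) (hW y).le) (hφt y).le)]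
    congr 1; ring
  have hLfin : L ≠ ∞ := by
    rw [hLrepr]
    exact ENNReal.mul_ne_top hψL1.ne ENNReal.ofReal_ne_top
  have hDle : (∫⁻ y, (∫⁻ x, ENNReal.ofReal (G x y * W x * φt x) ∂ν) * ENNReal.ofReal (W y * |ψ y|) ∂ν) ≤ L := by
    rw [hLdef]
    refine lintegral_mono fun y => ?_
    calc (∫⁻ x, ENNReal.ofReal (G x y * W x * φt x) ∂ν) * ENNReal.ofReal (W y * |ψ y|)
        ≤ ENNReal.ofReal (φt y / c) * ENNReal.ofReal (W y * |ψ y|) :=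
          mul_le_mul_left (hdual y) _
      _ = ENNReal.ofReal (|ψ y| * W y * φt y / c) := by
          rw [← ENNReal.ofReal_mul (div_nonneg (hφt y).le hc.le)]
          congr 1; ring
  have hLHS : ∫⁻ x, ENNReal.ofReal (|∫ y, G x y * W y * ψ y ∂ν| * W x * φt x) ∂ν = L := by
    rw [hLdef]
    refine lintegral_congr_ae ?_
    filter_upwards [heig] with x hx
    rw [← hx, abs_div, abs_of_pos hc]
    congr 1; ring
  have hRle : (∫⁻ x, ENNReal.ofReal ((∫ y, G x y * W y * |ψ y| ∂ν) * W x * φt x) ∂ν)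
      ≤ ∫⁻ x, J x * ENNReal.ofReal (W x * φt x) ∂ν := by
    refine lintegral_mono fun x => ?_
    rw [hIntRepr x, mul_assoc, ENNReal.ofReal_mul ENNReal.toReal_nonneg]
    exact mul_le_mul_left ENNReal.ofReal_toReal_le _
  have hptle : ∀ x, ENNReal.ofReal (|∫ y, G x y * W y * ψ y ∂ν| * W x * φt x)
      ≤ ENNReal.ofReal ((∫ y, G x y * W y * |ψ y| ∂ν) * W x * φt x) := by
    intro x
    apply ENNReal.ofReal_le_ofReal
    have h := htri x
    have hwp := (mul_pos (hW x) (hφt x)).le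
    nlinarith [abs_nonneg (∫ y, G x y * W y * ψ y ∂ν)]
  have hLle : (∫⁻ x, ENNReal.ofReal (|∫ y, G x y * W y * ψ y ∂ν| * W x * φt x) ∂ν)
      ≤ ∫⁻ x, ENNReal.ofReal ((∫ y, G x y * W y * |ψ y| ∂ν) * W x * φt x) ∂ν :=
    lintegral_mono hptle
  have hTfin : ∫⁻ x, J x * ENNReal.ofReal (W x * φt x) ∂ν ≤ L := hTon ▸ hDle
  have hchain : ∫⁻ x, ENNReal.ofReal (|∫ y, G x y * W y * ψ y ∂ν| * W x * φt x) ∂ν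
      = ∫⁻ x, ENNReal.ofReal ((∫ y, G x y * W y * |ψ y| ∂ν) * W x * φt x) ∂ν :=
    le_antisymm hLle (le_trans hRle (hTfin.trans_eq hLHS.symm))
  refine ⟨hchain, ?_⟩
  have hJfin : ∀ᵐ x ∂ν, J x < ∞ := by
    have hmm : Measurable fun x => J x * ENNReal.ofReal (W x * φt x) :=
      hJmeas.mul (ENNReal.measurable_ofReal.comp (hmW.mul hmφt))
    have := ae_lt_top hmm (lt_of_le_of_lt hTfin hLfin.lt_top).ne
    filter_upwards [this] with x hx
    by_contra h
    rw [not_lt, top_le_iff] at h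
    rw [h, ENNReal.top_mul (by
      simp only [ne_eq, ENNReal.ofReal_eq_zero, not_le]
      exact mul_pos (hW x) (hφt x))] at hx
    exact absurd hx (lt_irrefl _)
  have hpt : ∀ᵐ x ∂ν, ENNReal.ofReal (|∫ y, G x y * W y * ψ y ∂ν| * W x * φt x)
      = ENNReal.ofReal ((∫ y, G x y * W y * |ψ y| ∂ν) * W x * φt x) := by
    apply ae_eq_of_ae_le_of_lintegral_le (Filter.Eventually.of_forall hptle)
    · rw [hLHS]; exact hLfin
    · apply Measurable.aemeasurable
      have heqf : (fun x => ENNReal.ofReal ((∫ y, G x y * W y * |ψ y| ∂ν) * W x * φt x))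
          = fun x => ENNReal.ofReal ((J x).toReal * W x * φt x) := by
        funext x; rw [hIntRepr x]
      rw [heqf]
      exact ENNReal.measurable_ofReal.comp ((hJmeas.ennreal_toReal.mul hmW).mul hmφt)
    · exact hchain.ge
  have hν : ν ≠ 0 := by
    rintro rfl
    simp at hψne
  have : (Filter.NeBot (ae ν)) := ae_neBot.mpr hν
  obtain ⟨x₀, hx₀eq, hx₀fin⟩ := (hpt.and hJfin).exists
  have habs : |∫ y, G x₀ y * W y * ψ y ∂ν| = ∫ y, G x₀ y * W y * |ψ y| ∂ν := by
    have h1 : 0 ≤ |∫ y, G x₀ y * W y * ψ y ∂ν| * W x₀ * φt x₀ :=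
      mul_nonneg (mul_nonneg (abs_nonneg _) (hW x₀).le) (hφt x₀).le
    have h2 : 0 ≤ (∫ y, G x₀ y * W y * |ψ y| ∂ν) * W x₀ * φt x₀ := by
      rw [hIntRepr x₀]
      exact mul_nonneg (mul_nonneg ENNReal.toReal_nonneg (hW x₀).le) (hφt x₀).le
    have heq := (ENNReal.ofReal_eq_ofReal_iff h1 h2).mp hx₀eq
    have heq2 := mul_right_cancel₀ (hφt x₀).ne' heq
    exact mul_right_cancel₀ (hW x₀).ne' heq2
  have hInteg : Integrable (fun y => G x₀ y * W y * ψ y) ν := by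
    refine ⟨(((hGx x₀).mul hmW).mul hψmeas).aestronglyMeasurable, ?_⟩
    rw [hasFiniteIntegral_iff_norm]
    have heqn : ∀ y, ENNReal.ofReal ‖G x₀ y * W y * ψ y‖ = ENNReal.ofReal (G x₀ y * W y * |ψ y|) := by
      intro y
      rw [Real.norm_eq_abs, abs_mul, abs_of_pos (mul_pos (hGpos x₀ y) (hW y))]
    simp only [heqn]
    exact hx₀fin
  have hIntegAbs : Integrable (fun y => G x₀ y * W y * |ψ y|) ν := by
    refine hInteg.abs.congr (Filter.Eventually.of_forall fun y => ?_)
    show |G x₀ y * W y * ψ y| = G x₀ y * W y * |ψ y|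
    rw [abs_mul, abs_of_pos (mul_pos (hGpos x₀ y) (hW y))]
  rcases le_or_gt 0 (∫ y, G x₀ y * W y * ψ y ∂ν) with hpos | hneg
  · left
    have hz : ∫ y, (G x₀ y * W y * |ψ y| - G x₀ y * W y * ψ y) ∂ν = 0 := by
      rw [integral_sub hIntegAbs hInteg, ← habs, abs_of_nonneg hpos, sub_self]
    have hzero := (integral_eq_zero_iff_of_nonneg (fun y => by
        have h1 : ψ y ≤ |ψ y| := le_abs_self _
        have h2 : (0:ℝ) < G x₀ y * W y := mul_pos (hGpos x₀ y) (hW y)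
        have h3 : G x₀ y * W y * |ψ y| - G x₀ y * W y * ψ y
            = (G x₀ y * W y) * (|ψ y| - ψ y) := by ring
        simp only [Pi.sub_apply, Pi.zero_apply]
        have := mul_nonneg h2.le (sub_nonneg.mpr h1)
        linarith)
      (hIntegAbs.sub hInteg)).mp hz
    filter_upwards [hzero] with y hy
    simp only [Pi.sub_apply, Pi.zero_apply] at hy
    have h2 : (0:ℝ) < G x₀ y * W y := mul_pos (hGpos x₀ y) (hW y)
    have h4 : G x₀ y * W y * |ψ y| = G x₀ y * W y * ψ y := by linarith
    have h3 : |ψ y| = ψ y := mul_left_cancel₀ h2.ne' h4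
    linarith [abs_nonneg (ψ y)]
  · right
    have hz : ∫ y, (G x₀ y * W y * |ψ y| + G x₀ y * W y * ψ y) ∂ν = 0 := by
      rw [integral_add hIntegAbs hInteg, ← habs, abs_of_neg hneg]; ring
    have hzero := (integral_eq_zero_iff_of_nonneg (fun y => by
        have h1 : -|ψ y| ≤ ψ y := neg_abs_le _
        have h2 : (0:ℝ) < G x₀ y * W y := mul_pos (hGpos x₀ y) (hW y)
        simp only [Pi.add_apply, Pi.zero_apply]
        have h3 : (0:ℝ) ≤ (G x₀ y * W y) * (|ψ y| + ψ y) :=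
          mul_nonneg h2.le (by linarith)
        linarith [h3, (by ring : (G x₀ y * W y) * (|ψ y| + ψ y)
          = G x₀ y * W y * |ψ y| + G x₀ y * W y * ψ y)])
      (hIntegAbs.add hInteg)).mp hz
    filter_upwards [hzero] with y hy
    simp only [Pi.add_apply, Pi.zero_apply] at hy
    have h2 : (0:ℝ) < G x₀ y * W y := mul_pos (hGpos x₀ y) (hW y)
    have h4 : G x₀ y * W y * |ψ y| = G x₀ y * W y * (-ψ y) := by linarith
    have h3 : |ψ y| = -ψ y := mul_left_cancel₀ h2.ne' h4
    linarith [abs_nonneg (ψ y)]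
end
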